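/- Let A be the 2×2 coloring matrix with first row (1,1) and second row (1,0) (no two vertices of color 2 may be adjacent as parent and child). Then for all n ≥ 1, the number of A-colored plane trees on n vertices equals (2/n)·binom(3n-3, n-1). -/

import Mathlib

inductive CTree (α : Type) : Type
  | node : α → List (CTree α) → CTree α

namespace CTree

def color {α : Type} : CTree α → α
  | node c _ => c

def children {α : Type} : CTree α → List (CTree α)
  | node _ ts => ts

def size {α : Type} : CTree α → ℕ
  | node _ ts => 1 + (ts.attach.map fun t => size t.1).sum
decreasing_by
  have := List.sizeOf_lt_of_mem t.2
  simp only [CTree.node.sizeOf_spec]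
  omega

def Valid {α : Type} (A : Matrix α α ℕ) : CTree α → Prop
  | node c ts => ∀ t ∈ ts, A c t.color = 1 ∧ Valid A t

end CTree

/-- Number of `A`-colored plane trees with `n` vertices and root color `i`. -/
noncomputable def colorCount {m : ℕ} (A : Matrix (Fin m) (Fin m) ℕ) (i : Fin m) (n : ℕ) : ℕ :=
  {t : CTree (Fin m) | t.Valid A ∧ t.size = n ∧ t.color = i}.ncard

/-- Total number of `A`-colored plane trees with `n` vertices. -/
noncomputable def totalCount {α : Type} (A : Matrix α α ℕ) (n : ℕ) : ℕ :=
  {t : CTree α | t.Valid A ∧ t.size = n}.ncard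

namespace Stmt8
open CTree

abbrev M2 : Matrix (Fin 2) (Fin 2) ℕ := !![1, 1; 1, 0]

lemma size_node (c : Fin 2) (ts : List (CTree (Fin 2))) :
    (node c ts).size = 1 + (ts.map size).sum := by
  rw [size]; congr 1
  exact congrArg List.sum (List.attach_map_val (l := ts) (f := size))

lemma one_le_size (t : CTree (Fin 2)) : 1 ≤ t.size := by
  cases t with
  | node c ts => rw [size_node]; omega

lemma valid_node (c : Fin 2) (ts : List (CTree (Fin 2))) :
    Valid M2 (node c ts) ↔ ∀ t ∈ ts, M2 c t.color = 1 ∧ Valid M2 t := by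
  rw [Valid]

lemma M2_zero (j : Fin 2) : M2 0 j = 1 := by fin_cases j <;> decide
lemma M2_one (j : Fin 2) : M2 1 j = 1 ↔ j = 0 := by fin_cases j <;> decide

/-! ### Counting sequences -/

def G : ℕ → ℕ × ℕ
  | 0 => (1, 1)
  | n + 1 =>
    ((Finset.range (n+1)).attach.sum fun k =>
        ((G k.1).1 + (G k.1).2) * (G (n - k.1)).1,
     (Finset.range (n+1)).attach.sum fun k =>
        (G k.1).1 * (G (n - k.1)).2)
decreasing_by
  all_goals (have := Finset.mem_range.mp k.2; omega)

def tseq : ℕ → ℕ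
  | 0 => 0
  | n + 1 => (G n).1 + (G n).2

def aseq : ℕ → ℕ
  | 0 => 0
  | n + 1 => (G n).1

lemma G1_succ (n : ℕ) :
    (G (n+1)).1 = ∑ k ∈ Finset.range (n+1), tseq (k+1) * (G (n-k)).1 := by
  rw [G]
  simp only
  rw [← Finset.sum_attach (Finset.range (n+1)) (fun k => tseq (k+1) * (G (n-k)).1)]
  rfl

lemma G2_succ (n : ℕ) :
    (G (n+1)).2 = ∑ k ∈ Finset.range (n+1), aseq (k+1) * (G (n-k)).2 := by
  rw [G]
  simp only
  rw [← Finset.sum_attach (Finset.range (n+1)) (fun k => aseq (k+1) * (G (n-k)).2)]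
  rfl

/-! ### Finiteness -/

lemma finite_lists {β : Type} {s : Set β} (hs : s.Finite) (n : ℕ) :
    {l : List β | (∀ x ∈ l, x ∈ s) ∧ l.length ≤ n}.Finite := by
  have : Finite ↥s := hs.to_subtype
  have h := List.finite_length_le ↥s n
  have himg := h.image (List.map (Subtype.val))
  apply himg.subset
  rintro l ⟨hl, hlen⟩
  refine ⟨l.attach.map (fun x => ⟨x.1, hl _ x.2⟩), by simpa using hlen, ?_⟩
  simp [List.map_map]

lemma ncard_biUnion_range {β : Type} (N : ℕ) (F : ℕ → Set β) (hfin : ∀ k, (F k).Finite)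
    (hdisj : ∀ i j, i ≠ j → Disjoint (F i) (F j)) :
    (⋃ k ∈ Finset.range N, F k).ncard = ∑ k ∈ Finset.range N, (F k).ncard := by
  induction N with
  | zero => simp
  | succ n ih =>
    rw [Finset.sum_range_succ, ← ih]
    have heq : (⋃ k ∈ Finset.range (n+1), F k) = (⋃ k ∈ Finset.range n, F k) ∪ F n := by
      rw [Finset.range_add_one, Finset.set_biUnion_insert, Set.union_comm]
    rw [heq, Set.ncard_union_eq ?hd ?h1 ?h2]
    case hd =>
      rw [Set.disjoint_iUnion_left]
      intro i
      rw [Set.disjoint_iUnion_left]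
      intro hi
      exact hdisj i n (by simp at hi; omega)
    case h1 => exact Set.Finite.biUnion (Finset.range n).finite_toSet fun k _ => hfin k
    case h2 => exact hfin n

lemma ncard_prod {β γ : Type} (S : Set β) (L : Set γ) :
    (S ×ˢ L).ncard = S.ncard * L.ncard := by
  rw [← Nat.card_coe_set_eq, Nat.card_congr (Equiv.Set.prod S L), Nat.card_prod,
    Nat.card_coe_set_eq, Nat.card_coe_set_eq]

lemma length_le_sum_sizes (ts : List (CTree (Fin 2))) : ts.length ≤ (ts.map size).sum := by
  induction ts with
  | nil => simp
  | cons hd tl ih =>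
    have := one_le_size hd
    simp only [List.map_cons, List.sum_cons, List.length_cons]
    omega

lemma finite_sizeSet (n : ℕ) : {t : CTree (Fin 2) | t.size = n}.Finite := by
  induction n using Nat.strong_induction_on with
  | _ n ih =>
    match n with
    | 0 =>
      convert Set.finite_empty
      ext t
      simp only [Set.mem_setOf_eq, Set.mem_empty_iff_false, iff_false]
      intro h
      have := one_le_size t
      omega
    | m + 1 =>
      set B : Set (CTree (Fin 2)) := ⋃ k ∈ Finset.range (m+1), {t : CTree (Fin 2) | t.size = k} with hBdef
      have hB : B.Finite :=
        Set.Finite.biUnion (Finset.range (m+1)).finite_toSet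
          (fun k hk => ih k (by simp at hk; omega))
      have hL := finite_lists hB m
      have himg := (hL.image (fun l => node 0 l)).union (hL.image (fun l => node 1 l))
      apply himg.subset
      intro t ht
      match t with
      | node c ts =>
        simp only [Set.mem_setOf_eq] at ht
        rw [size_node] at ht
        have hmem : ∀ x ∈ ts, x ∈ B := by
          intro x hx
          have hxs : x.size ≤ m := by
            have h1 : x.size ∈ ts.map size := List.mem_map.mpr ⟨x, hx, rfl⟩
            have := List.single_le_sum (fun y (_ : y ∈ ts.map size) => Nat.zero_le y) _ h1
            omega
          rw [hBdef]
          simp only [Set.mem_iUnion]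
          exact ⟨x.size, by simp; omega, rfl⟩
        have hlen : ts.length ≤ m := le_trans (length_le_sum_sizes ts) (by omega)
        have hc : c = 0 ∨ c = 1 := by omega
        rcases hc with rfl | rfl
        · exact Or.inl ⟨ts, ⟨hmem, hlen⟩, rfl⟩
        · exact Or.inr ⟨ts, ⟨hmem, hlen⟩, rfl⟩

/-! ### Sets of trees and lists -/

def treeSet (n : ℕ) : Set (CTree (Fin 2)) := {t | t.Valid M2 ∧ t.size = n}
def treeSetC (i : Fin 2) (n : ℕ) : Set (CTree (Fin 2)) :=
  {t | t.Valid M2 ∧ t.size = n ∧ t.color = i}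
def listT (n : ℕ) : Set (List (CTree (Fin 2))) :=
  {l | (∀ t ∈ l, t.Valid M2) ∧ (l.map size).sum = n}
def listA (n : ℕ) : Set (List (CTree (Fin 2))) :=
  {l | (∀ t ∈ l, t.Valid M2 ∧ t.color = 0) ∧ (l.map size).sum = n}

lemma finite_treeSet (n : ℕ) : (treeSet n).Finite :=
  (finite_sizeSet n).subset fun _ ht => ht.2
lemma finite_treeSetC (i : Fin 2) (n : ℕ) : (treeSetC i n).Finite :=
  (finite_sizeSet n).subset fun _ ht => ht.2.1

lemma finite_listsum (n : ℕ) : {l : List (CTree (Fin 2)) | (l.map size).sum = n}.Finite := by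
  set B : Set (CTree (Fin 2)) := ⋃ k ∈ Finset.range (n+1), {t : CTree (Fin 2) | t.size = k} with hBdef
  have hB : B.Finite :=
    Set.Finite.biUnion (Finset.range (n+1)).finite_toSet (fun k _ => finite_sizeSet k)
  apply (finite_lists hB n).subset
  intro l hl
  simp only [Set.mem_setOf_eq] at hl
  constructor
  · intro x hx
    have hxs : x.size ≤ n := by
      have h1 : x.size ∈ l.map size := List.mem_map.mpr ⟨x, hx, rfl⟩
      have := List.single_le_sum (fun y (_ : y ∈ l.map size) => Nat.zero_le y) _ h1
      omega
    rw [hBdef]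
    simp only [Set.mem_iUnion]
    exact ⟨x.size, by simp; omega, rfl⟩
  · exact le_trans (length_le_sum_sizes l) (by omega)

lemma finite_listT (n : ℕ) : (listT n).Finite :=
  (finite_listsum n).subset fun _ h => h.2
lemma finite_listA (n : ℕ) : (listA n).Finite :=
  (finite_listsum n).subset fun _ h => h.2

/-! ### Decompositions -/

lemma treeSetC0_succ (n : ℕ) :
    treeSetC 0 (n+1) = (fun l => node 0 l) '' listT n := by
  ext t
  constructor
  · rintro ⟨hv, hs, hc⟩
    match t with
    | node c ts =>
      have hc0 : c = 0 := hc
      subst hc0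
      refine ⟨ts, ⟨?_, ?_⟩, rfl⟩
      · intro x hx
        exact ((valid_node 0 ts).mp hv x hx).2
      · rw [size_node] at hs; omega
  · rintro ⟨l, ⟨hv, hs⟩, rfl⟩
    refine ⟨(valid_node 0 l).mpr fun x hx => ⟨M2_zero _, hv x hx⟩, ?_, rfl⟩
    rw [size_node]; omega

lemma treeSetC1_succ (n : ℕ) :
    treeSetC 1 (n+1) = (fun l => node 1 l) '' listA n := by
  ext t
  constructor
  · rintro ⟨hv, hs, hc⟩
    match t with
    | node c ts =>
      have hc0 : c = 1 := hc
      subst hc0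
      refine ⟨ts, ⟨?_, ?_⟩, rfl⟩
      · intro x hx
        have h := (valid_node 1 ts).mp hv x hx
        exact ⟨h.2, (M2_one _).mp h.1⟩
      · rw [size_node] at hs; omega
  · rintro ⟨l, ⟨hv, hs⟩, rfl⟩
    refine ⟨(valid_node 1 l).mpr fun x hx => ⟨(M2_one _).mpr (hv x hx).2, (hv x hx).1⟩, ?_, rfl⟩
    rw [size_node]; omega

lemma node_inj (c : Fin 2) : Function.Injective (fun l => node c l) := by
  intro a b h
  injection h

lemma treeSet_split (n : ℕ) :
    (treeSet n).ncard = (treeSetC 0 n).ncard + (treeSetC 1 n).ncard := by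
  have heq : treeSet n = treeSetC 0 n ∪ treeSetC 1 n := by
    ext t
    constructor
    · rintro ⟨hv, hs⟩
      have : t.color = 0 ∨ t.color = 1 := by omega
      rcases this with h | h
      · exact Or.inl ⟨hv, hs, h⟩
      · exact Or.inr ⟨hv, hs, h⟩
    · rintro (⟨hv, hs, _⟩ | ⟨hv, hs, _⟩) <;> exact ⟨hv, hs⟩
  rw [heq, Set.ncard_union_eq ?hd (finite_treeSetC 0 n) (finite_treeSetC 1 n)]
  rw [Set.disjoint_left]
  rintro t ⟨_, _, h0⟩ ⟨_, _, h1⟩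
  rw [h0] at h1
  exact absurd h1 (by decide)

lemma listT_zero : listT 0 = {([] : List (CTree (Fin 2)))} := by
  ext l
  constructor
  · rintro ⟨_, hs⟩
    match l with
    | [] => rfl
    | hd :: tl =>
      have := one_le_size hd
      simp only [List.map_cons, List.sum_cons] at hs
      omega
  · rintro rfl
    exact ⟨by simp, by simp⟩

lemma listA_zero : listA 0 = {([] : List (CTree (Fin 2)))} := by
  ext l
  constructor
  · rintro ⟨_, hs⟩
    match l with
    | [] => rfl
    | hd :: tl =>
      have := one_le_size hd
      simp only [List.map_cons, List.sum_cons] at hs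
      omega
  · rintro rfl
    exact ⟨by simp, by simp⟩

def consMap : CTree (Fin 2) × List (CTree (Fin 2)) → List (CTree (Fin 2)) :=
  fun p => p.1 :: p.2

lemma consMap_inj : Function.Injective consMap := by
  rintro ⟨a, la⟩ ⟨b, lb⟩ h
  simp only [consMap, List.cons.injEq] at h
  exact Prod.ext h.1 h.2

lemma listT_succ (n : ℕ) :
    listT (n+1) = ⋃ k ∈ Finset.range (n+1), consMap '' ((treeSet (k+1)) ×ˢ (listT (n-k))) := by
  ext l
  simp only [Set.mem_iUnion, Finset.mem_range]
  constructor
  · rintro ⟨hv, hs⟩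
    match l with
    | [] => simp at hs
    | hd :: tl =>
      simp only [List.map_cons, List.sum_cons] at hs
      have h1 := one_le_size hd
      have hhd : hd ∈ treeSet (hd.size - 1 + 1) := ⟨hv hd (by simp), by omega⟩
      have htl : tl ∈ listT (n - (hd.size - 1)) :=
        ⟨fun x hx => hv x (by simp [hx]), by omega⟩
      exact ⟨hd.size - 1, by omega, (hd, tl), ⟨hhd, htl⟩, rfl⟩
  · rintro ⟨k, hk, ⟨t, tl⟩, ⟨ht, htl⟩, rfl⟩
    have hts : t.size = k + 1 := ht.2
    have htv : t.Valid M2 := ht.1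
    have htlv : ∀ x ∈ tl, x.Valid M2 := htl.1
    have htls : (tl.map size).sum = n - k := htl.2
    have hkn : k ≤ n := by omega
    constructor
    · intro x hx
      rcases List.mem_cons.mp hx with rfl | hx
      · exact htv
      · exact htlv x hx
    · show ((t :: tl).map size).sum = n + 1
      simp only [List.map_cons, List.sum_cons]
      omega

lemma listA_succ (n : ℕ) :
    listA (n+1) = ⋃ k ∈ Finset.range (n+1), consMap '' ((treeSetC 0 (k+1)) ×ˢ (listA (n-k))) := by
  ext l
  simp only [Set.mem_iUnion, Finset.mem_range]
  constructor
  · rintro ⟨hv, hs⟩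
    match l with
    | [] => simp at hs
    | hd :: tl =>
      simp only [List.map_cons, List.sum_cons] at hs
      have h1 := one_le_size hd
      have hhd : hd ∈ treeSetC 0 (hd.size - 1 + 1) :=
        ⟨(hv hd (by simp)).1, by omega, (hv hd (by simp)).2⟩
      have htl : tl ∈ listA (n - (hd.size - 1)) :=
        ⟨fun x hx => hv x (by simp [hx]), by omega⟩
      exact ⟨hd.size - 1, by omega, (hd, tl), ⟨hhd, htl⟩, rfl⟩
  · rintro ⟨k, hk, ⟨t, tl⟩, ⟨ht, htl⟩, rfl⟩
    have hts : t.size = k + 1 := ht.2.1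
    have htv : t.Valid M2 := ht.1
    have htc : t.color = 0 := ht.2.2
    have htlv : ∀ x ∈ tl, x.Valid M2 ∧ x.color = 0 := htl.1
    have htls : (tl.map size).sum = n - k := htl.2
    have hkn : k ≤ n := by omega
    constructor
    · intro x hx
      rcases List.mem_cons.mp hx with rfl | hx
      · exact ⟨htv, htc⟩
      · exact htlv x hx
    · show ((t :: tl).map size).sum = n + 1
      simp only [List.map_cons, List.sum_cons]
      omega

/-! ### The main count -/

lemma hdisjT (F : ℕ → Set (CTree (Fin 2))) (hF : ∀ k, ∀ t ∈ F k, t.size = k+1)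
    (L : ℕ → Set (List (CTree (Fin 2)))) (i j : ℕ) (hij : i ≠ j) :
    Disjoint (consMap '' ((F i) ×ˢ (L i))) (consMap '' ((F j) ×ˢ (L j))) := by
  rw [Set.disjoint_left]
  rintro l ⟨⟨t, tl⟩, ⟨ht, _⟩, rfl⟩ ⟨⟨s, sl⟩, ⟨hs, _⟩, heq⟩
  simp only [consMap, List.cons.injEq] at heq
  apply hij
  have h1 := hF i t ht
  have h2 := hF j s hs
  rw [heq.1] at h2
  omega

theorem count_G : ∀ n, (listT n).ncard = (G n).1 ∧ (listA n).ncard = (G n).2 := by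
  intro n
  induction n using Nat.strong_induction_on with
  | _ n ih =>
    match n with
    | 0 => rw [listT_zero, listA_zero, G]; simp
    | m + 1 =>
      have hc0 : ∀ k ≤ m, (treeSetC 0 (k+1)).ncard = (G k).1 := by
        intro k hk
        rw [treeSetC0_succ, Set.ncard_image_of_injective _ (node_inj 0), (ih k (by omega)).1]
      have hc1 : ∀ k ≤ m, (treeSetC 1 (k+1)).ncard = (G k).2 := by
        intro k hk
        rw [treeSetC1_succ, Set.ncard_image_of_injective _ (node_inj 1), (ih k (by omega)).2]
      have htree : ∀ k ≤ m, (treeSet (k+1)).ncard = tseq (k+1) := by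
        intro k hk
        rw [treeSet_split, hc0 k hk, hc1 k hk]
        rfl
      constructor
      · rw [listT_succ, ncard_biUnion_range]
        · rw [G1_succ]
          apply Finset.sum_congr rfl
          intro k hk
          rw [Set.ncard_image_of_injective _ consMap_inj, ncard_prod,
            htree k (by simp at hk; omega), (ih (m-k) (by omega)).1]
        · intro k
          exact (((finite_treeSet (k+1)).prod (finite_listT (m-k))).image _)
        · exact fun i j hij =>
            hdisjT (fun k => treeSet (k+1)) (fun k t ht => ht.2) (fun k => listT (m-k)) i j hij
      · rw [listA_succ, ncard_biUnion_range]
        · rw [G2_succ]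
          apply Finset.sum_congr rfl
          intro k hk
          rw [Set.ncard_image_of_injective _ consMap_inj, ncard_prod,
            hc0 k (by simp at hk; omega), (ih (m-k) (by omega)).2]
          rfl
        · intro k
          exact (((finite_treeSetC 0 (k+1)).prod (finite_listA (m-k))).image _)
        · exact fun i j hij =>
            hdisjT (fun k => treeSetC 0 (k+1)) (fun k t ht => ht.2.1) (fun k => listA (m-k)) i j hij

theorem totalCount_eq (n : ℕ) : totalCount M2 (n+1) = tseq (n+1) := by
  have h : totalCount M2 (n+1) = (treeSet (n+1)).ncard := rfl
  rw [h, treeSet_split]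
  have h0 : (treeSetC 0 (n+1)).ncard = (G n).1 := by
    rw [treeSetC0_succ, Set.ncard_image_of_injective _ (node_inj 0), (count_G n).1]
  have h1 : (treeSetC 1 (n+1)).ncard = (G n).2 := by
    rw [treeSetC1_succ, Set.ncard_image_of_injective _ (node_inj 1), (count_G n).2]
  rw [h0, h1]
  rfl

/-! ### Part II: power series -/

open PowerSeries

noncomputable def Tq : ℚ⟦X⟧ := PowerSeries.mk fun n => (tseq n : ℚ)
noncomputable def Lq : ℚ⟦X⟧ := PowerSeries.mk fun n => ((G n).1 : ℚ)
noncomputable def Mq : ℚ⟦X⟧ := PowerSeries.mk fun n => ((G n).2 : ℚ)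
noncomputable def Aq : ℚ⟦X⟧ := PowerSeries.mk fun n => (aseq n : ℚ)

lemma hL : Lq * (1 - Tq) = 1 := by
  have key : Lq = 1 + Tq * Lq := by
    ext n
    cases n with
    | zero =>
      simp [Lq, Tq, PowerSeries.coeff_mk, PowerSeries.coeff_zero_eq_constantCoeff,
        tseq, G]
    | succ m =>
      rw [map_add, PowerSeries.coeff_mul,
        Finset.Nat.sum_antidiagonal_eq_sum_range_succ
          (fun i j => (PowerSeries.coeff (R := ℚ) i Tq) * (PowerSeries.coeff (R := ℚ) j Lq)),
        Finset.sum_range_succ']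
      simp only [Lq, Tq, PowerSeries.coeff_mk, PowerSeries.coeff_one, Nat.succ_ne_zero,
        if_false, zero_add]
      rw [G1_succ]
      push_cast
      rw [show (tseq 0 : ℚ) = 0 from by norm_num [tseq]]
      simp only [zero_mul, add_zero]
  linear_combination key

lemma hM : Mq * (1 - Aq) = 1 := by
  have key : Mq = 1 + Aq * Mq := by
    ext n
    cases n with
    | zero =>
      simp [Mq, Aq, PowerSeries.coeff_mk, PowerSeries.coeff_zero_eq_constantCoeff,
        aseq, G]
    | succ m =>
      rw [map_add, PowerSeries.coeff_mul,
        Finset.Nat.sum_antidiagonal_eq_sum_range_succ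
          (fun i j => (PowerSeries.coeff (R := ℚ) i Aq) * (PowerSeries.coeff (R := ℚ) j Mq)),
        Finset.sum_range_succ']
      simp only [Mq, Aq, PowerSeries.coeff_mk, PowerSeries.coeff_one, Nat.succ_ne_zero,
        if_false, zero_add]
      rw [G2_succ]
      push_cast
      rw [show (aseq 0 : ℚ) = 0 from by norm_num [aseq]]
      simp only [zero_mul, add_zero]
  linear_combination key

lemma hAX : Aq = X * Lq := by
  ext n
  cases n with
  | zero =>
    simp [Aq, PowerSeries.coeff_mk, PowerSeries.coeff_zero_eq_constantCoeff, aseq]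
  | succ m =>
    rw [PowerSeries.coeff_succ_X_mul]
    simp [Aq, Lq, PowerSeries.coeff_mk, aseq]

lemma hTAB : Tq = Aq + X * Mq := by
  ext n
  cases n with
  | zero =>
    rw [map_add]
    simp [Tq, Aq, PowerSeries.coeff_mk, PowerSeries.coeff_zero_eq_constantCoeff, tseq, aseq]
  | succ m =>
    rw [map_add, PowerSeries.coeff_succ_X_mul]
    simp [Tq, Aq, Mq, PowerSeries.coeff_mk, tseq, aseq]

lemma hA : Aq * (1 - Tq) = X := by
  rw [hAX, mul_assoc, hL, mul_one]

lemma hB : (Tq - Aq) * (1 - Aq) = X := by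
  have h : Tq - Aq = X * Mq := by rw [hTAB]; ring
  rw [h, mul_assoc, hM, mul_one]

lemma hcubic : (1 - Tq)^3 - (1 - Tq)^2 + 2*X*(1 - Tq) - X^2 = 0 := by
  linear_combination (X + Aq - Aq*Tq + Tq^2 - 1) * hA + (2*Tq - Tq^2 - 1) * hB

noncomputable def U : ℚ⟦X⟧ := 1 - Tq
noncomputable def dU : ℚ⟦X⟧ := d⁄dX ℚ U
noncomputable def ddU : ℚ⟦X⟧ := d⁄dX ℚ dU

lemma hder1 : (3*U^2 - 2*U + 2*X) * dU = 2*X - 2*U := by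
  have hcubic' : U^3 + (X*U + X*U) = U^2 + X^2 := by
    have := hcubic
    rw [show (1 - Tq) = U from rfl] at this
    linear_combination this
  have h := congrArg (d⁄dX ℚ) hcubic'
  simp only [map_add, Derivation.leibniz, Derivation.leibniz_pow, derivative_X,
    smul_eq_mul, nsmul_eq_mul, mul_one, Nat.cast_ofNat, pow_one] at h
  rw [show (3:ℕ) - 1 = 2 from rfl, show (2:ℕ) - 1 = 1 from rfl] at h
  rw [show (d⁄dX ℚ) U = dU from rfl] at h
  linear_combination h

lemma hder2 : (3*U^2 - 2*U + 2*X) * ddU + (6*U - 2)*dU^2 + 4*dU - 2 = 0 := by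
  have hder1' : U^2*dU + U^2*dU + U^2*dU + (X*dU + X*dU) + (U + U) =
      (X + X) + (U*dU + U*dU) := by linear_combination hder1
  have h := congrArg (d⁄dX ℚ) hder1'
  simp only [map_add, Derivation.leibniz, Derivation.leibniz_pow, derivative_X,
    smul_eq_mul, nsmul_eq_mul, mul_one, Nat.cast_ofNat, pow_one] at h
  rw [show (2:ℕ) - 1 = 1 from rfl] at h
  have hdd : d⁄dX ℚ dU = ddU := rfl
  rw [hdd] at h
  rw [show (d⁄dX ℚ) U = dU from rfl] at h
  linear_combination h

lemma hU0 : PowerSeries.constantCoeff (R := ℚ) U = 1 := by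
  have : PowerSeries.constantCoeff (R := ℚ) Tq = 0 := by
    simp [Tq, ← PowerSeries.coeff_zero_eq_constantCoeff, PowerSeries.coeff_mk, tseq]
  simp [U, map_sub, this]

lemma hd_ne : (3*U^2 - 2*U + 2*X : ℚ⟦X⟧) ≠ 0 := by
  intro h
  have h0 := congrArg (PowerSeries.constantCoeff (R := ℚ)) h
  simp [map_add, map_sub, map_mul, map_pow, hU0, map_ofNat] at h0
  norm_num at h0

lemma hE : (4*X - 27*X^2)*ddU - 2*dU - 6*U + 2 = 0 := by
  have hd1eq : (3*U^2 - 2*U + 2*X) * dU = 2*X - 2*U := hder1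
  have hd2eq : (3*U^2 - 2*U + 2*X) * ddU = 2 - 4*dU - (6*U - 2)*dU^2 := by
    linear_combination hder2
  have hcu : U^3 - U^2 + 2*X*U - X^2 = 0 := by
    have := hcubic
    rw [show (1 - Tq) = U from rfl] at this
    linear_combination this
  have key : (3*U^2 - 2*U + 2*X)^3 * ((4*X - 27*X^2)*ddU - 2*dU - 6*U + 2) = 0 := by
    linear_combination
      (-72*U^2 + 216*U^3 - 162*U^4 + 144*X*U - 648*X^2*U) * hcu
      + (-4*(4*X-27*X^2)*(3*U^2 - 2*U + 2*X)
         - (4*X-27*X^2)*(6*U-2)*((3*U^2 - 2*U + 2*X)*dU + (2*X-2*U))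
         - 2*(3*U^2 - 2*U + 2*X)^2) * hd1eq
      + ((4*X-27*X^2)*(3*U^2 - 2*U + 2*X)^2) * hd2eq
  rcases mul_eq_zero.mp key with h | h
  · exact absurd (pow_eq_zero_iff (by norm_num)|>.mp h) hd_ne
  · exact h

lemma coeff_U_succ (k : ℕ) : PowerSeries.coeff (R := ℚ) (k+1) U = -(tseq (k+1) : ℚ) := by
  simp [U, Tq, PowerSeries.coeff_mk, PowerSeries.coeff_one]

lemma coeff_zero_X_mul (g : ℚ⟦X⟧) : PowerSeries.coeff (R := ℚ) 0 (X * g) = 0 := by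
  rw [mul_comm]
  exact PowerSeries.coeff_zero_mul_X g

lemma hE' : X*(PowerSeries.C (R := ℚ) 4 * ddU - PowerSeries.C (R := ℚ) 27 * (X*ddU))
    - PowerSeries.C (R := ℚ) 2 * dU - PowerSeries.C (R := ℚ) 6 * U + PowerSeries.C (R := ℚ) 2 = 0 := by
  simp only [map_ofNat]
  linear_combination hE

lemma ht1 : (tseq 1 : ℚ) = 2 := by
  have h := congrArg (PowerSeries.coeff (R := ℚ) 0) hE'
  simp only [map_sub, map_add, coeff_zero_X_mul, PowerSeries.coeff_C_mul,
    PowerSeries.coeff_C, if_pos rfl, map_zero] at h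
  rw [show (0:ℕ) = (0:ℕ) from rfl] at h
  have hdU0 := PowerSeries.coeff_derivative U 0
  rw [show (d⁄dX ℚ) U = dU from rfl] at hdU0
  rw [hdU0, coeff_U_succ 0] at h
  have hU0' : PowerSeries.coeff (R := ℚ) 0 U = 1 := by
    rw [PowerSeries.coeff_zero_eq_constantCoeff]
    exact hU0
  rw [hU0'] at h
  push_cast at h
  linarith

lemma ht2 : (tseq 2 : ℚ) = 3 := by
  have h := congrArg (PowerSeries.coeff (R := ℚ) (0+1)) hE'
  simp only [map_sub, map_add, PowerSeries.coeff_succ_X_mul, PowerSeries.coeff_C_mul,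
    PowerSeries.coeff_C, map_zero] at h
  rw [if_neg (by omega)] at h
  have e1 := PowerSeries.coeff_derivative dU 0
  have e2 := PowerSeries.coeff_derivative U (0+1)
  rw [show (d⁄dX ℚ) dU = ddU from rfl] at e1
  rw [show (d⁄dX ℚ) U = dU from rfl] at e2
  have e3 : PowerSeries.coeff (R := ℚ) (0+1) U = -(tseq (0+1) : ℚ) := coeff_U_succ 0
  have e4 : PowerSeries.coeff (R := ℚ) (0+1+1) U = -(tseq (0+1+1) : ℚ) := coeff_U_succ (0+1)
  rw [coeff_zero_X_mul, e1, e2, e4, e3] at h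
  have h1 : (tseq (0+1) : ℚ) = 2 := ht1
  rw [h1] at h
  have h2 : (tseq (0+1+1) : ℚ) = (tseq 2 : ℚ) := rfl
  rw [h2] at h
  push_cast at h
  linarith

lemma rec_t (k : ℕ) :
    2*((k:ℚ)+3)*(2*(k:ℚ)+3)*(tseq (k+1+1+1) : ℚ)
      = 3*(3*(k:ℚ)+4)*(3*(k:ℚ)+5)*(tseq (k+1+1) : ℚ) := by
  have h := congrArg (PowerSeries.coeff (R := ℚ) (k+1+1)) hE'
  simp only [map_sub, map_add, PowerSeries.coeff_succ_X_mul, PowerSeries.coeff_C_mul,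
    PowerSeries.coeff_C, map_zero] at h
  rw [if_neg (by omega)] at h
  have e1 := PowerSeries.coeff_derivative dU (k+1)
  have e2 := PowerSeries.coeff_derivative dU k
  have e3 := PowerSeries.coeff_derivative U (k+1+1)
  have e4 := PowerSeries.coeff_derivative U (k+1)
  rw [show (d⁄dX ℚ) dU = ddU from rfl] at e1 e2
  rw [show (d⁄dX ℚ) U = dU from rfl] at e3 e4
  rw [e1, e2, e3, e4, coeff_U_succ (k+1+1), coeff_U_succ (k+1)] at h
  push_cast at h
  linear_combination -h

lemma rec_all (m : ℕ) (hm : 1 ≤ m) :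
    2*((m:ℚ)+1)*(2*(m:ℚ)-1)*(tseq (m+1) : ℚ)
      = 3*(3*(m:ℚ)-2)*(3*(m:ℚ)-1)*(tseq m : ℚ) := by
  match m, hm with
  | 1, _ =>
    have h2 : (tseq (1+1) : ℚ) = 3 := ht2
    have h1 : (tseq 1 : ℚ) = 2 := ht1
    rw [h2, h1]
    norm_num
  | (r+2), _ =>
    have h : 2*((r:ℚ)+3)*(2*(r:ℚ)+3)*(tseq (r+3) : ℚ)
        = 3*(3*(r:ℚ)+4)*(3*(r:ℚ)+5)*(tseq (r+2) : ℚ) := rec_t r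
    rw [show tseq (r+2+1) = tseq (r+3) from rfl]
    push_cast
    linear_combination h

lemma fact_ne (n : ℕ) : ((n.factorial : ℚ)) ≠ 0 :=
  Nat.cast_ne_zero.mpr (Nat.factorial_ne_zero n)

lemma binom_step (k : ℕ) :
    2*((k:ℚ)+1)*(2*(k:ℚ)+1)*(Nat.choose (3*k+3) (k+1) : ℚ)
      = 3*(3*(k:ℚ)+1)*(3*(k:ℚ)+2)*(Nat.choose (3*k) k : ℚ) := by
  have h1 := Nat.choose_mul_factorial_mul_factorial (show k+1 ≤ 3*k+3 by omega)
  have h2 := Nat.choose_mul_factorial_mul_factorial (show k ≤ 3*k by omega)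
  rw [show 3*k+3-(k+1) = 2*k+2 by omega] at h1
  rw [show 3*k-k = 2*k by omega] at h2
  have q1 : (Nat.choose (3*k+3) (k+1) : ℚ) * (k+1).factorial * (2*k+2).factorial
      = ((3*k+3).factorial : ℚ) := by exact_mod_cast congrArg (Nat.cast (R := ℚ)) h1
  have q2 : (Nat.choose (3*k) k : ℚ) * k.factorial * (2*k).factorial
      = ((3*k).factorial : ℚ) := by exact_mod_cast congrArg (Nat.cast (R := ℚ)) h2
  have f1 : ((3*k+3).factorial : ℚ)
      = (3*(k:ℚ)+3)*(3*(k:ℚ)+2)*(3*(k:ℚ)+1)*((3*k).factorial : ℚ) := by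
    rw [show (3*k+3) = (3*k+2)+1 from rfl, Nat.factorial_succ,
      show (3*k+2) = (3*k+1)+1 from rfl, Nat.factorial_succ,
      show (3*k+1) = (3*k)+1 from rfl, Nat.factorial_succ]
    push_cast
    ring
  have f2 : ((2*k+2).factorial : ℚ)
      = (2*(k:ℚ)+2)*(2*(k:ℚ)+1)*((2*k).factorial : ℚ) := by
    rw [show (2*k+2) = (2*k+1)+1 from rfl, Nat.factorial_succ,
      show (2*k+1) = (2*k)+1 from rfl, Nat.factorial_succ]
    push_cast
    ring
  have f3 : ((k+1).factorial : ℚ) = ((k:ℚ)+1)*(k.factorial : ℚ) := by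
    rw [Nat.factorial_succ]
    push_cast
    ring
  have c1 : (Nat.choose (3*k+3) (k+1) : ℚ)
      = ((3*k+3).factorial : ℚ) / (((k+1).factorial : ℚ) * ((2*k+2).factorial : ℚ)) := by
    rw [eq_div_iff (mul_ne_zero (fact_ne _) (fact_ne _))]
    linear_combination q1
  have c2 : (Nat.choose (3*k) k : ℚ)
      = ((3*k).factorial : ℚ) / ((k.factorial : ℚ) * ((2*k).factorial : ℚ)) := by
    rw [eq_div_iff (mul_ne_zero (fact_ne _) (fact_ne _))]
    linear_combination q2
  rw [c1, c2, f1, f2, f3]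
  have hk : (k.factorial : ℚ) ≠ 0 := fact_ne _
  have h2k : ((2*k).factorial : ℚ) ≠ 0 := fact_ne _
  field_simp

lemma closed : ∀ k : ℕ, ((k:ℚ)+1) * (tseq (k+1) : ℚ) = 2 * (Nat.choose (3*k) k : ℚ) := by
  intro k
  induction k with
  | zero =>
    norm_num
    exact ht1
  | succ k ih =>
    have hr := rec_all (k+1) (by omega)
    push_cast at hr
    have hb := binom_step k
    have hne : (2*((k:ℚ)+1)*(2*(k:ℚ)+1)) ≠ 0 := by positivity
    apply mul_left_cancel₀ hne
    rw [show 3*(k+1) = 3*k+3 from by ring]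
    push_cast
    linear_combination ((k:ℚ)+1)*hr + (3*(3*(k:ℚ)+1)*(3*(k:ℚ)+2))*ih - 2*hb

end Stmt8



/-- For the matrix `[[1,1],[1,0]]` (no two color-2 vertices adjacent), the number of
colored plane trees on `n` vertices is `(2/n)·C(3n-3, n-1)`. -/
theorem stmt8 (n : ℕ) (hn : 1 ≤ n) :
    n * totalCount (!![1, 1; 1, 0] : Matrix (Fin 2) (Fin 2) ℕ) n =
      2 * (3 * n - 3).choose (n - 1) := by
  obtain ⟨k, rfl⟩ : ∃ k, n = k + 1 := ⟨n - 1, by omega⟩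
  rw [show 3 * (k+1) - 3 = 3*k by omega, show k+1-1 = k by omega]
  rw [Stmt8.totalCount_eq k]
  exact_mod_cast Stmt8.closed k
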